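/- arXiv:0811.2590 — 2 statements merged into one kernel-verified Lean document; each statement's English description precedes it below -/
import Mathlib

section
/- Define ε on the 0-Hecke algebra H_n by ε(T_σ) = 1 if σ = w₀ and ε(T_σ) = 0 otherwise. Then the bilinear form (a,b) ↦ ε(ab) on H_n is nondegenerate, so (H_n, ε) is a Frobenius algebra. -/
/-- Coxeter length of a permutation of `Fin m`, as the number of inversions. -/
def invLength {m : ℕ} (σ : Equiv.Perm (Fin m)) : ℕ :=
  (Finset.univ.filter (fun p : Fin m × Fin m => p.1 < p.2 ∧ σ p.2 < σ p.1)).card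

/-- The `i`-th simple reflection `s_i = (i, i+1)` in the symmetric group on `n+1` letters. -/
def sgen (n : ℕ) (i : Fin n) : Equiv.Perm (Fin (n + 1)) :=
  Equiv.swap i.castSucc i.succ

/-- The longest element `w₀` of the symmetric group on `Fin m`, `j ↦ m - 1 - j`. -/
def longest (m : ℕ) : Equiv.Perm (Fin m) :=
  ⟨Fin.rev, Fin.rev, fun i => i.rev_rev, fun i => i.rev_rev⟩

lemma sgen_val (n : ℕ) (i : Fin n) (x : Fin (n + 1)) :
    ((sgen n i x : Fin (n + 1)) : ℕ) =
      if (x : ℕ) = (i : ℕ) then (i : ℕ) + 1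
      else if (x : ℕ) = (i : ℕ) + 1 then (i : ℕ) else (x : ℕ) := by
  have hcs : ((i.castSucc : Fin (n + 1)) : ℕ) = (i : ℕ) := rfl
  have hss : ((i.succ : Fin (n + 1)) : ℕ) = (i : ℕ) + 1 := rfl
  rcases eq_or_ne x i.castSucc with h | h
  · subst h
    rw [sgen, Equiv.swap_apply_left, hss, hcs, if_pos rfl]
  · rcases eq_or_ne x i.succ with h2 | h2
    · subst h2
      rw [sgen, Equiv.swap_apply_right, hcs, hss, if_neg (by omega), if_pos rfl]
    · rw [sgen, Equiv.swap_apply_of_ne_of_ne h h2]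
      have hx1 : (x : ℕ) ≠ (i : ℕ) := fun hh => h (Fin.ext (hh.trans hcs.symm))
      have hx2 : (x : ℕ) ≠ (i : ℕ) + 1 := fun hh => h2 (Fin.ext (hh.trans hss.symm))
      rw [if_neg hx1, if_neg hx2]

lemma sgen_lt_iff (n : ℕ) (i : Fin n) {x y : Fin (n + 1)} (hxy : x ≠ y)
    (h1 : ¬(x = i.castSucc ∧ y = i.succ)) (h2 : ¬(y = i.castSucc ∧ x = i.succ)) :
    sgen n i x < sgen n i y ↔ x < y := by
  have hx := sgen_val n i x
  have hy := sgen_val n i y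
  have hxy' : (x : ℕ) ≠ (y : ℕ) := fun h => hxy (Fin.ext h)
  have h1' : ¬((x : ℕ) = (i : ℕ) ∧ (y : ℕ) = (i : ℕ) + 1) :=
    fun ⟨a, b⟩ => h1 ⟨Fin.ext a, Fin.ext b⟩
  have h2' : ¬((y : ℕ) = (i : ℕ) ∧ (x : ℕ) = (i : ℕ) + 1) :=
    fun ⟨a, b⟩ => h2 ⟨Fin.ext a, Fin.ext b⟩
  rw [Fin.lt_iff_val_lt_val, Fin.lt_iff_val_lt_val, hx, hy]
  split_ifs <;> omega

lemma sgen_mul_self (n : ℕ) (i : Fin n) : sgen n i * sgen n i = 1 := by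
  rw [sgen]; exact Equiv.swap_mul_self _ _

lemma sgen_inv (n : ℕ) (i : Fin n) : (sgen n i)⁻¹ = sgen n i := by
  rw [sgen]; exact Equiv.swap_inv _ _

lemma invLength_up (n : ℕ) (i : Fin n) (w : Equiv.Perm (Fin (n + 1)))
    (h : w⁻¹ i.castSucc < w⁻¹ i.succ) :
    invLength (sgen n i * w) = invLength w + 1 := by
  classical
  set c := w⁻¹ i.castSucc with hc
  set d := w⁻¹ i.succ with hd
  have hwc : w c = i.castSucc := w.apply_symm_apply _
  have hwd : w d = i.succ := w.apply_symm_apply _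
  have hkey : (Finset.univ.filter fun p : Fin (n + 1) × Fin (n + 1) =>
        p.1 < p.2 ∧ (sgen n i * w) p.2 < (sgen n i * w) p.1)
      = insert (c, d)
        (Finset.univ.filter fun p : Fin (n + 1) × Fin (n + 1) => p.1 < p.2 ∧ w p.2 < w p.1) := by
    ext p
    rw [Finset.mem_filter]
    simp only [Finset.mem_insert, Finset.mem_filter, Finset.mem_univ, true_and,
      Equiv.Perm.mul_apply]
    rcases eq_or_ne p (c, d) with rfl | hp
    · simp only [eq_self_iff_true, true_or, iff_true]
      refine ⟨h, ?_⟩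
      rw [hwc, hwd, sgen, Equiv.swap_apply_left, Equiv.swap_apply_right]
      exact Fin.castSucc_lt_succ
    · have hiff : ¬(p = (c, d)) := hp
      by_cases hlt : p.1 < p.2
      · have hne : w p.2 ≠ w p.1 := fun hh => hlt.ne' (w.injective hh)
        have ha : ¬(w p.2 = i.castSucc ∧ w p.1 = i.succ) := by
          rintro ⟨ha1, ha2⟩
          have e1 : p.2 = c := w.injective (by rw [hwc, ha1])
          have e2 : p.1 = d := w.injective (by rw [hwd, ha2])
          rw [e1, e2] at hlt
          exact absurd h (not_lt.2 hlt.le)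
        have hb : ¬(w p.1 = i.castSucc ∧ w p.2 = i.succ) := by
          rintro ⟨hb1, hb2⟩
          exact hp (Prod.ext (w.injective (by rw [hwc, hb1])) (w.injective (by rw [hwd, hb2])))
        have := sgen_lt_iff n i hne ha hb
        constructor
        · rintro ⟨_, hs⟩; exact Or.inr ⟨hlt, this.1 hs⟩
        · rintro (hpe | ⟨_, hs⟩)
          · exact absurd hpe hp
          · exact ⟨hlt, this.2 hs⟩
      · constructor
        · rintro ⟨h1, _⟩; exact absurd h1 hlt
        · rintro (hpe | ⟨h1, _⟩)
          · exact absurd hpe hp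
          · exact absurd h1 hlt
  have hnot : (c, d) ∉
      (Finset.univ.filter fun p : Fin (n + 1) × Fin (n + 1) => p.1 < p.2 ∧ w p.2 < w p.1) := by
    simp only [Finset.mem_filter, Finset.mem_univ, true_and, not_and]
    intro _
    rw [hwc, hwd]
    exact not_lt.2 (Fin.castSucc_lt_succ (i := i)).le
  rw [invLength, invLength, hkey, Finset.card_insert_of_notMem hnot]

lemma invLength_down (n : ℕ) (i : Fin n) (w : Equiv.Perm (Fin (n + 1)))
    (h : w⁻¹ i.succ < w⁻¹ i.castSucc) :
    invLength w = invLength (sgen n i * w) + 1 := by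
  have hcond : (sgen n i * w)⁻¹ i.castSucc < (sgen n i * w)⁻¹ i.succ := by
    have h1 : (sgen n i * w)⁻¹ i.castSucc = w⁻¹ i.succ := by
      rw [mul_inv_rev, sgen_inv, Equiv.Perm.mul_apply]
      congr 1
      rw [sgen, Equiv.swap_apply_left]
    have h2 : (sgen n i * w)⁻¹ i.succ = w⁻¹ i.castSucc := by
      rw [mul_inv_rev, sgen_inv, Equiv.Perm.mul_apply]
      congr 1
      rw [sgen, Equiv.swap_apply_right]
    rw [h1, h2]; exact h
  have := invLength_up n i (sgen n i * w) hcond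
  rwa [← mul_assoc, sgen_mul_self, one_mul] at this

lemma invLength_dichotomy (n : ℕ) (i : Fin n) (w : Equiv.Perm (Fin (n + 1))) :
    invLength (sgen n i * w) = invLength w + 1 ∨
      invLength w = invLength (sgen n i * w) + 1 := by
  have hne : w⁻¹ i.castSucc ≠ w⁻¹ i.succ :=
    fun hh => (Fin.castSucc_lt_succ (i := i)).ne (w⁻¹.injective hh)
  rcases lt_or_gt_of_ne hne with h | h
  · exact Or.inl (invLength_up n i w h)
  · exact Or.inr (invLength_down n i w h)

lemma invLength_one (m : ℕ) : invLength (1 : Equiv.Perm (Fin m)) = 0 := by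
  rw [invLength, Finset.card_eq_zero, Finset.filter_eq_empty_iff]
  rintro p -
  rintro ⟨h1, h2⟩
  simp only [Equiv.Perm.one_apply] at h2
  exact absurd h2 (asymm h1)

lemma exists_descent (n : ℕ) (w : Equiv.Perm (Fin (n + 1))) (hw : w ≠ 1) :
    ∃ i : Fin n, invLength w = invLength (sgen n i * w) + 1 := by
  by_contra hcon
  push_neg at hcon
  have hmono : StrictMono (fun j => w⁻¹ j) := by
    rw [Fin.strictMono_iff_lt_succ]
    intro i
    have hne : w⁻¹ i.castSucc ≠ w⁻¹ i.succ :=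
      fun hh => (Fin.castSucc_lt_succ (i := i)).ne (w⁻¹.injective hh)
    rcases lt_or_gt_of_ne hne with h | h
    · exact h
    · exact absurd (invLength_down n i w h) (hcon i)
  have hid : (fun j => w⁻¹ j) = id := by
    have h := Subsingleton.elim
      (StrictMono.orderIsoOfSurjective _ hmono (w⁻¹).surjective) (OrderIso.refl _)
    funext x
    have h2 : (StrictMono.orderIsoOfSurjective _ hmono (w⁻¹).surjective) x
        = (OrderIso.refl _) x := by rw [h]
    simpa using h2
  apply hw
  have hinv : w⁻¹ = 1 := Equiv.ext fun x => congrFun hid x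
  rw [← inv_inv w, hinv, inv_one]

lemma invLength_mul_le {m : ℕ} (x y : Equiv.Perm (Fin m)) :
    invLength (x * y) ≤ invLength x + invLength y := by
  classical
  set S := Finset.univ.filter
    (fun p : Fin m × Fin m => p.1 < p.2 ∧ (x * y) p.2 < (x * y) p.1) with hS
  set Tx := Finset.univ.filter (fun p : Fin m × Fin m => p.1 < p.2 ∧ x p.2 < x p.1) with hTx
  set Ty := Finset.univ.filter (fun p : Fin m × Fin m => p.1 < p.2 ∧ y p.2 < y p.1) with hTy
  have h1 : (S ∩ Ty).card ≤ Ty.card := Finset.card_le_card Finset.inter_subset_right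
  have h2 : (S \ Ty).card ≤ Tx.card := by
    apply Finset.card_le_card_of_injOn (fun p => (y p.1, y p.2))
    · intro p hp
      rw [Finset.mem_coe, Finset.mem_sdiff, hS, Finset.mem_filter] at hp
      simp only [hS, hTy, Finset.mem_sdiff, Finset.mem_filter, Finset.mem_univ, true_and,
        Equiv.Perm.mul_apply, not_and] at hp
      obtain ⟨⟨h12, hxy⟩, hny⟩ := hp
      have hne : y p.1 ≠ y p.2 := fun hh => h12.ne (y.injective hh)
      have hlt : y p.1 < y p.2 := lt_of_le_of_ne (not_lt.1 (fun hl => hny h12 hl)) hne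
      simp only [hTx, Finset.mem_coe, Finset.mem_filter, Finset.mem_univ, true_and]
      exact ⟨hlt, hxy⟩
    · intro p hp q hq hpq
      have e1 := y.injective (congrArg Prod.fst hpq)
      have e2 := y.injective (congrArg Prod.snd hpq)
      exact Prod.ext e1 e2
  calc S.card = (S ∩ Ty).card + (S \ Ty).card := (Finset.card_inter_add_card_sdiff S Ty).symm
    _ ≤ Ty.card + Tx.card := add_le_add h1 h2
    _ = Tx.card + Ty.card := add_comm _ _

lemma invLength_inv {m : ℕ} (σ : Equiv.Perm (Fin m)) : invLength σ⁻¹ = invLength σ := by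
  classical
  rw [invLength, invLength]
  apply Finset.card_bij' (fun p _ => ((σ⁻¹ : Equiv.Perm (Fin m)) p.2, (σ⁻¹ : Equiv.Perm (Fin m)) p.1))
    (fun p _ => (σ p.2, σ p.1))
  · intro p hp
    simp only [Finset.mem_filter, Finset.mem_univ, true_and] at hp ⊢
    exact ⟨hp.2, by simpa using hp.1⟩
  · intro p hp
    simp only [Finset.mem_filter, Finset.mem_univ, true_and] at hp ⊢
    exact ⟨hp.2, by simpa using hp.1⟩
  · intro p hp
    simp
  · intro p hp
    simp

lemma longest_apply {m : ℕ} (x : Fin m) : longest m x = x.rev := rfl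

lemma longest_inv (m : ℕ) : (longest m)⁻¹ = longest m := by ext x; rfl

lemma invLength_longest_mul {m : ℕ} (x : Equiv.Perm (Fin m)) :
    invLength (longest m * x) + invLength x = invLength (longest m) := by
  classical
  have h1 : (Finset.univ.filter fun p : Fin m × Fin m =>
      p.1 < p.2 ∧ (longest m) p.2 < (longest m) p.1)
      = Finset.univ.filter (fun p : Fin m × Fin m => p.1 < p.2) := by
    ext p
    simp only [Finset.mem_filter, Finset.mem_univ, true_and, longest_apply, Fin.rev_lt_rev,
      and_self]
  have h2 : (Finset.univ.filter fun p : Fin m × Fin m =>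
      p.1 < p.2 ∧ (longest m * x) p.2 < (longest m * x) p.1)
      = (Finset.univ.filter (fun p : Fin m × Fin m => p.1 < p.2)).filter
          (fun p => ¬ x p.2 < x p.1) := by
    ext p
    simp only [Finset.mem_filter, Finset.mem_univ, true_and, Equiv.Perm.mul_apply,
      longest_apply, Fin.rev_lt_rev, and_assoc]
    constructor
    · rintro ⟨hp, hq⟩; exact ⟨hp, not_lt.2 hq.le⟩
    · rintro ⟨hp, hq⟩
      refine ⟨hp, lt_of_le_of_ne (not_lt.1 hq) ?_⟩
      exact fun hh => hp.ne (x.injective hh)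
  have h3 : (Finset.univ.filter fun p : Fin m × Fin m => p.1 < p.2 ∧ x p.2 < x p.1)
      = (Finset.univ.filter (fun p : Fin m × Fin m => p.1 < p.2)).filter
          (fun p => x p.2 < x p.1) := by
    rw [Finset.filter_filter]
  rw [invLength, invLength, invLength, h1, h2, h3]
  rw [add_comm]
  exact Finset.card_filter_add_card_filter_not _

section Hecke

variable {k : Type*} [Field k] {A : Type*} [Ring A] [Algebra k A] {n : ℕ}
  (B : Module.Basis (Equiv.Perm (Fin (n + 1))) k A)

lemma claimA (hone : B 1 = 1)
    (hup : ∀ (i : Fin n) (w : Equiv.Perm (Fin (n + 1))),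
      invLength (sgen n i * w) > invLength w →
        B (sgen n i) * B w = B (sgen n i * w))
    (hdown : ∀ (i : Fin n) (w : Equiv.Perm (Fin (n + 1))),
      invLength (sgen n i * w) < invLength w →
        B (sgen n i) * B w = B w) :
    ∀ (N : ℕ) (u v : Equiv.Perm (Fin (n + 1))), invLength u ≤ N →
      ∃ z, B u * B v = B z ∧ invLength z ≤ invLength u + invLength v ∧
        (invLength z = invLength u + invLength v → z = u * v) := by
  intro N
  induction N with
  | zero =>
    intro u v hu
    rcases eq_or_ne u 1 with rfl | hne
    · exact ⟨v, by rw [hone, one_mul], by rw [invLength_one]; omega,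
        fun _ => (one_mul v).symm⟩
    · obtain ⟨i, hi⟩ := exists_descent n u hne
      omega
  | succ N ih =>
    intro u v hu
    rcases eq_or_ne u 1 with rfl | hne
    · exact ⟨v, by rw [hone, one_mul], by rw [invLength_one]; omega,
        fun _ => (one_mul v).symm⟩
    · obtain ⟨i, hi⟩ := exists_descent n u hne
      set s := sgen n i with hs
      set u' := s * u with hu'
      have hu2 : u = s * u' := by rw [hu', ← mul_assoc, sgen_mul_self, one_mul]
      have hlu' : invLength u = invLength u' + 1 := hi
      have hBu : B s * B u' = B u := by
        have := hup i u' (by rw [← hu2]; omega)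
        rw [← hu2] at this
        exact this
      obtain ⟨z', hz', hbd', heq'⟩ := ih u' v (by omega)
      have hdich := invLength_dichotomy n i z'
      rw [← hs] at hdich
      rcases hdich with hup' | hdown'
      · refine ⟨s * z', ?_, by omega, ?_⟩
        · rw [← hBu, mul_assoc, hz']
          have h := hup i z' (by rw [← hs]; omega)
          rw [← hs] at h
          exact h
        · intro he
          have hz'e : invLength z' = invLength u' + invLength v := by omega
          rw [heq' hz'e, ← mul_assoc, ← hu2]
      · refine ⟨z', ?_, by omega, fun he => absurd he (by omega)⟩
        rw [← hBu, mul_assoc, hz']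
        have h := hdown i z' (by rw [← hs]; omega)
        rw [← hs] at h
        exact h

lemma claimB (hone : B 1 = 1)
    (hup : ∀ (i : Fin n) (w : Equiv.Perm (Fin (n + 1))),
      invLength (sgen n i * w) > invLength w →
        B (sgen n i) * B w = B (sgen n i * w))
    (hdown : ∀ (i : Fin n) (w : Equiv.Perm (Fin (n + 1))),
      invLength (sgen n i * w) < invLength w →
        B (sgen n i) * B w = B w) :
    ∀ (N : ℕ) (u z : Equiv.Perm (Fin (n + 1))), invLength u ≤ N →
      invLength u + invLength (u⁻¹ * z) = invLength z →
        B u * B (u⁻¹ * z) = B z := by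
  intro N
  induction N with
  | zero =>
    intro u z hu hlen
    rcases eq_or_ne u 1 with rfl | hne
    · rw [inv_one, one_mul, hone, one_mul]
    · obtain ⟨i, hi⟩ := exists_descent n u hne
      omega
  | succ N ih =>
    intro u z hu hlen
    rcases eq_or_ne u 1 with rfl | hne
    · rw [inv_one, one_mul, hone, one_mul]
    · obtain ⟨i, hi⟩ := exists_descent n u hne
      set s := sgen n i with hs
      set u' := s * u with hu'
      have hu2 : u = s * u' := by rw [hu', ← mul_assoc, sgen_mul_self, one_mul]
      have hlu' : invLength u = invLength u' + 1 := hi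
      have hBu : B s * B u' = B u := by
        have := hup i u' (by rw [← hu2]; omega)
        rw [← hu2] at this
        exact this
      have hszfac : u' * (u⁻¹ * z) = s * z := by
        rw [hu', mul_assoc, mul_inv_cancel_left]
      have hszle : invLength (s * z) ≤ invLength u' + invLength (u⁻¹ * z) := by
        rw [← hszfac]; exact invLength_mul_le _ _
      have hsz : invLength z = invLength (s * z) + 1 := by
        have hdich := invLength_dichotomy n i z
        rw [← hs] at hdich
        rcases hdich with h | h
        · omega
        · exact h
      have hinv' : u'⁻¹ * (s * z) = u⁻¹ * z := by
        rw [hu', mul_inv_rev, sgen_inv, mul_assoc, ← mul_assoc (sgen n i), sgen_mul_self,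
          one_mul]
      have hihyp : invLength u' + invLength (u'⁻¹ * (s * z)) = invLength (s * z) := by
        rw [hinv']; omega
      have hIH : B u' * B (u⁻¹ * z) = B (s * z) := by
        have := ih u' (s * z) (by omega) hihyp
        rwa [hinv'] at this
      rw [← hBu, mul_assoc, hIH]
      have hfinal := hup i (s * z) (by
        rw [← mul_assoc, sgen_mul_self, one_mul]
        omega)
      rw [← mul_assoc, sgen_mul_self, one_mul] at hfinal
      exact hfinal

end Hecke

/-- In the 0-Hecke algebra `H_{n+1}` (basis `T_w` with `T_e = 1`,
`T_s T_w = T_{sw}` when `ℓ(sw) > ℓ(w)` and `T_s T_w = T_w` when `ℓ(sw) < ℓ(w)`),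
the bilinear form `(a,b) ↦ ε(ab)` with `ε(T_σ) = δ_{σ,w₀}` is nondegenerate,
so `(H_n, ε)` is a Frobenius algebra. -/
theorem zeroHecke_trace_nondegenerate
    (k : Type*) [Field k] (A : Type*) [Ring A] [Algebra k A] (n : ℕ)
    (B : Module.Basis (Equiv.Perm (Fin (n + 1))) k A)
    (hone : B 1 = 1)
    (hup : ∀ (i : Fin n) (w : Equiv.Perm (Fin (n + 1))),
      invLength (sgen n i * w) > invLength w →
        B (sgen n i) * B w = B (sgen n i * w))
    (hdown : ∀ (i : Fin n) (w : Equiv.Perm (Fin (n + 1))),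
      invLength (sgen n i * w) < invLength w →
        B (sgen n i) * B w = B w) :
    (∀ a : A, (∀ b : A, B.coord (longest (n + 1)) (a * b) = 0) → a = 0) ∧
    (∀ b : A, (∀ a : A, B.coord (longest (n + 1)) (a * b) = 0) → b = 0) := by
  classical
  set w0 := longest (n + 1) with hw0
  constructor
  · intro a ha
    by_contra hne
    have hsupp : (B.repr a).support.Nonempty := by
      rw [Finsupp.support_nonempty_iff]
      exact fun h => hne (by simpa using (LinearEquiv.map_eq_zero_iff B.repr).1 h)
    obtain ⟨u₀, hu₀mem, hu₀max⟩ := Finset.exists_max_image _ invLength hsupp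
    set v := u₀⁻¹ * w0 with hv
    have hvinv : v = (w0 * u₀)⁻¹ := by rw [hv, mul_inv_rev, hw0, longest_inv]
    have hlenv : invLength u₀ + invLength v = invLength w0 := by
      have h1 := invLength_longest_mul u₀
      rw [hvinv, invLength_inv]
      rw [hw0]
      omega
    have hu₀v : u₀ * v = w0 := by rw [hv, mul_inv_cancel_left]
    have hmain : (B.coord w0) (a * B v) = B.repr a u₀ := by
      conv_lhs => rw [← Module.Basis.sum_repr B a]
      rw [Finset.sum_mul]
      simp_rw [smul_mul_assoc]
      rw [map_sum]
      rw [Finset.sum_eq_single u₀]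
      · have hprod : B u₀ * B v = B w0 := by
          have := claimB B hone hup hdown (invLength u₀) u₀ w0 le_rfl (by rw [← hv]; exact hlenv)
          rwa [← hv] at this
        rw [hprod, map_smul, Module.Basis.coord_apply, Module.Basis.repr_self, Finsupp.single_apply,
          if_pos rfl, smul_eq_mul, mul_one]
      · intro u _ hune
        by_cases hcu : B.repr a u = 0
        · rw [hcu, zero_smul, map_zero]
        · have hmem : u ∈ (B.repr a).support := Finsupp.mem_support_iff.2 hcu
          have hle : invLength u ≤ invLength u₀ := hu₀max u hmem
          obtain ⟨z, hz, hbd, heq⟩ :=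
            claimA B hone hup hdown (invLength u) u v le_rfl
          rw [hz, map_smul, Module.Basis.coord_apply, Module.Basis.repr_self, Finsupp.single_apply]
          rw [if_neg, smul_zero]
          intro hzw0
          have hbd2 : invLength w0 ≤ invLength u + invLength v := by
            rw [← hzw0]; exact hbd
          have heql : invLength z = invLength u + invLength v := by rw [hzw0]; omega
          have hz2 := heq heql
          have huu : u = u₀ := by
            apply mul_right_cancel (b := v)
            rw [← hz2, hzw0, hu₀v]
          exact hune huu
      · intro h
        exact absurd (Finset.mem_univ u₀) h
    rw [ha (B v)] at hmain
    exact (Finsupp.mem_support_iff.1 hu₀mem) hmain.symm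
  · intro b hb
    by_contra hne
    have hsupp : (B.repr b).support.Nonempty := by
      rw [Finsupp.support_nonempty_iff]
      exact fun h => hne (by simpa using (LinearEquiv.map_eq_zero_iff B.repr).1 h)
    obtain ⟨u₀, hu₀mem, hu₀max⟩ := Finset.exists_max_image _ invLength hsupp
    set g := w0 * u₀⁻¹ with hg
    have hleng : invLength g + invLength u₀ = invLength w0 := by
      have h1 := invLength_longest_mul (u₀⁻¹)
      rw [invLength_inv] at h1
      rw [hg, hw0]
      omega
    have hgu₀ : g * u₀ = w0 := by rw [hg, inv_mul_cancel_right]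
    have hginv : g⁻¹ * w0 = u₀ := by rw [← hgu₀, inv_mul_cancel_left]
    have hmain : (B.coord w0) (B g * b) = B.repr b u₀ := by
      conv_lhs => rw [← Module.Basis.sum_repr B b]
      rw [Finset.mul_sum]
      simp_rw [mul_smul_comm]
      rw [map_sum, Finset.sum_eq_single u₀]
      · have hprod : B g * B u₀ = B w0 := by
          have hcb := claimB B hone hup hdown (invLength g) g w0 le_rfl
            (by rw [hginv]; exact hleng)
          rwa [hginv] at hcb
        rw [hprod, map_smul, Module.Basis.coord_apply, Module.Basis.repr_self, Finsupp.single_apply,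
          if_pos rfl, smul_eq_mul, mul_one]
      · intro u _ hune
        by_cases hcu : B.repr b u = 0
        · rw [hcu, zero_smul, map_zero]
        · have hmem : u ∈ (B.repr b).support := Finsupp.mem_support_iff.2 hcu
          have hle : invLength u ≤ invLength u₀ := hu₀max u hmem
          obtain ⟨z, hz, hbd, heq⟩ := claimA B hone hup hdown (invLength g) g u le_rfl
          rw [hz, map_smul, Module.Basis.coord_apply, Module.Basis.repr_self, Finsupp.single_apply,
            if_neg, smul_zero]
          intro hzw0
          have hbd2 : invLength w0 ≤ invLength g + invLength u := by
            rw [← hzw0]; exact hbd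
          have heql : invLength z = invLength g + invLength u := by rw [hzw0]; omega
          have hz2 := heq heql
          have huu : u = u₀ := by
            apply mul_left_cancel (a := g)
            rw [← hz2, hzw0, hgu₀]
          exact hune huu
      · intro h
        exact absurd (Finset.mem_univ u₀) h
    rw [hb (B g)] at hmain
    exact (Finsupp.mem_support_iff.1 hu₀mem) hmain.symm
end

section
/- In the Nilcoxeter algebra NC_n, the trace ε(T_σ T_γ) = 1 if and only if ℓ(σ) + ℓ(γ) = ℓ(σγ) and σγ = w₀; equivalently, for each σ ∈ S_n there is a unique γ ∈ S_n (namely γ = σ⁻¹w₀) with ε(T_σ T_γ) = 1. -/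
lemma invLength_mul_longest {m : ℕ} (σ : Equiv.Perm (Fin m)) :
    invLength σ + invLength (σ * longest m) = invLength (longest m) := by
  classical
  have hS : (Finset.univ.filter (fun p : Fin m × Fin m =>
      p.1 < p.2 ∧ (longest m) p.2 < (longest m) p.1)) =
      Finset.univ.filter (fun p : Fin m × Fin m => p.1 < p.2) := by
    apply Finset.filter_congr
    intro p _
    simp only [longest, Equiv.coe_fn_mk, Fin.rev_lt_rev, and_self]
  set S := Finset.univ.filter (fun p : Fin m × Fin m => p.1 < p.2) with hSdef
  have h1 : invLength σ = (S.filter (fun p => σ p.2 < σ p.1)).card := by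
    unfold invLength
    rw [hSdef, Finset.filter_filter]
  have h2 : invLength (σ * longest m) = (S.filter (fun p => σ p.1 < σ p.2)).card := by
    unfold invLength
    apply Finset.card_nbij' (i := fun p => (p.2.rev, p.1.rev)) (j := fun p => (p.2.rev, p.1.rev))
    · intro p hp
      simp only [Finset.mem_coe, Finset.mem_filter] at hp ⊢
      simp only [hSdef, Finset.mem_coe, Finset.mem_filter, Finset.mem_univ, true_and, Equiv.Perm.mul_apply,
        longest, Equiv.coe_fn_mk, Fin.rev_lt_rev] at *
      exact ⟨hp.1, hp.2⟩
    · intro p hp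
      simp only [Finset.mem_coe, Finset.mem_filter] at hp ⊢
      simp only [hSdef, Finset.mem_coe, Finset.mem_filter, Finset.mem_univ, true_and, Equiv.Perm.mul_apply,
        longest, Equiv.coe_fn_mk, Fin.rev_lt_rev, Fin.rev_rev] at *
      exact ⟨hp.1, hp.2⟩
    · intro p hp; simp
    · intro p hp; simp
  have h3 : invLength (longest m) = S.card := by
    unfold invLength; rw [hS]
  rw [h1, h2, h3]
  rw [← Finset.card_filter_add_card_filter_not (s := S) (p := fun p => σ p.2 < σ p.1)]
  congr 1
  congr 1
  apply Finset.filter_congr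
  intro p hp
  simp only [hSdef, Finset.mem_filter, Finset.mem_univ, true_and] at hp
  simp only [not_lt, decide_eq_true_eq]
  constructor
  · exact le_of_lt
  · intro h
    exact lt_of_le_of_ne h (fun he => absurd (σ.injective he) (ne_of_lt hp))

/-- In the Nilcoxeter algebra `NC_{n+1}`, `ε(T_σ T_γ) = 1` iff
`ℓ(σ) + ℓ(γ) = ℓ(σγ)` and `σγ = w₀`; equivalently, for each `σ` there is a
unique `γ` (namely `γ = σ⁻¹ w₀`) with `ε(T_σ T_γ) = 1`. -/
theorem nilCoxeter_complementary_unique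
    (k : Type*) [Field k] (A : Type*) [Ring A] [Algebra k A] (n : ℕ)
    (B : Module.Basis (Equiv.Perm (Fin (n + 1))) k A)
    (hone : B 1 = 1)
    (hmul : ∀ σ γ : Equiv.Perm (Fin (n + 1)),
      B σ * B γ =
        if invLength (σ * γ) = invLength σ + invLength γ then B (σ * γ) else 0) :
    (∀ σ γ : Equiv.Perm (Fin (n + 1)),
        B.coord (longest (n + 1)) (B σ * B γ) = 1 ↔
          (invLength σ + invLength γ = invLength (σ * γ) ∧ σ * γ = longest (n + 1))) ∧
    (∀ σ : Equiv.Perm (Fin (n + 1)),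
        ∃! γ : Equiv.Perm (Fin (n + 1)), B.coord (longest (n + 1)) (B σ * B γ) = 1) ∧
    (∀ σ : Equiv.Perm (Fin (n + 1)),
        B.coord (longest (n + 1)) (B σ * B (σ⁻¹ * longest (n + 1))) = 1) := by
  classical
  set w := longest (n + 1) with hw
  have coordB : ∀ τ : Equiv.Perm (Fin (n + 1)),
      B.coord w (B τ) = if τ = w then (1 : k) else 0 := by
    intro τ
    simp [Module.Basis.coord_apply, Module.Basis.repr_self, Finsupp.single_apply]
  have main : ∀ σ γ : Equiv.Perm (Fin (n + 1)),
      B.coord w (B σ * B γ) = 1 ↔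
        (invLength σ + invLength γ = invLength (σ * γ) ∧ σ * γ = w) := by
    intro σ γ
    rw [hmul]
    by_cases hl : invLength (σ * γ) = invLength σ + invLength γ
    · rw [if_pos hl, coordB]
      by_cases he : σ * γ = w
      · simp [he, hl.symm]
      · simp [he, hl.symm]
    · rw [if_neg hl]
      simp only [map_zero]
      constructor
      · intro h; exact absurd h.symm one_ne_zero
      · intro ⟨h, _⟩; exact absurd h.symm hl
  have part3 : ∀ σ : Equiv.Perm (Fin (n + 1)),
      B.coord w (B σ * B (σ⁻¹ * w)) = 1 := by
    intro σ
    rw [main]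
    have hprod : σ * (σ⁻¹ * w) = w := by group
    refine ⟨?_, hprod⟩
    rw [hprod]
    have := invLength_mul_longest σ⁻¹
    rw [invLength_inv] at this
    rw [← hw] at this
    linarith
  refine ⟨main, ?_, part3⟩
  intro σ
  refine ⟨σ⁻¹ * w, part3 σ, ?_⟩
  intro γ hγ
  have := (main σ γ).mp hγ
  have h := this.2
  rw [← h]; group
end
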